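/- arXiv:1504.07851 — 3 statements merged into one kernel-verified Lean document; each statement's English description precedes it below -/
import Mathlib

section
/- Let R and S be strings over an alphabet Σ with S nonempty, and suppose every character of S occurs in R. Then there exists a maximal cover of S with respect to R. In particular, the cover obtained by greedily and repeatedly taking as the next block the longest prefix of the remaining suffix of S that is a substring of R is a maximal cover. -/
/-- `sub R i j` is the substring `R[i..j]` of `R` (1-indexed, inclusive). -/
def sub {σ : Type*} (R : List σ) (i j : ℕ) : List σ := (R.drop (i - 1)).take (j - i + 1)

/-- `x` is a substring of `R`. -/
def IsSubstring {σ : Type*} (x R : List σ) : Prop := ∃ u v, R = u ++ x ++ v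

/-- The string of `R` referred to by a block `(i, j)`. -/
def blockStr {σ : Type*} (R : List σ) (b : ℕ × ℕ) : List σ := sub R b.1 b.2

/-- `C` is a cover (relative compression) of `S` with respect to `R`. -/
def IsCover {σ : Type*} (R S : List σ) (C : List (ℕ × ℕ)) : Prop :=
  (∀ b ∈ C, 1 ≤ b.1 ∧ b.1 ≤ b.2 ∧ b.2 ≤ R.length) ∧
  S = (C.map (blockStr R)).flatten

/-- A cover is maximal if no two consecutive blocks concatenate to a substring of `R`. -/
def IsMaximal {σ : Type*} (R : List σ) (C : List (ℕ × ℕ)) : Prop :=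
  ∀ l : ℕ, ∀ h : l + 1 < C.length,
    ¬ IsSubstring (blockStr R (C[l]'(by omega)) ++ blockStr R (C[l + 1]'h)) R

/-- The length of the block `(i, j)`, i.e. `j - i + 1`. -/
def blockLen (b : ℕ × ℕ) : ℕ := b.2 - b.1 + 1

/-- The (1-indexed) start position in `S` of the block of `C` with 0-based index `l`. -/
def startPos (C : List (ℕ × ℕ)) (l : ℕ) : ℕ := 1 + ((C.take l).map blockLen).sum

/-- The character `α` occurs in `R`, i.e. `[α] = R[i..i]` for some `1 ≤ i ≤ |R|`. -/
def OccursIn {σ : Type*} (α : σ) (R : List σ) : Prop :=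
  ∃ i, 1 ≤ i ∧ i ≤ R.length ∧ [α] = sub R i i

/-- `C` is the greedy cover of `S` w.r.t. `R`: each block is a longest prefix of the
remaining suffix of `S` that is a substring of `R`. -/
def IsGreedy {σ : Type*} (R S : List σ) (C : List (ℕ × ℕ)) : Prop :=
  ∀ l : ℕ, ∀ h : l < C.length, ∀ x : List σ,
    x <+: S.drop (startPos C l - 1) → IsSubstring x R →
      x.length ≤ blockLen (C[l]'h)

lemma blockStr_length {σ : Type*} (R : List σ) (b : ℕ × ℕ)
    (h : 1 ≤ b.1 ∧ b.1 ≤ b.2 ∧ b.2 ≤ R.length) :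
    (blockStr R b).length = blockLen b := by
  simp [blockStr, sub, blockLen]
  omega

lemma drop_startPos {σ : Type*} (R S : List σ) (C : List (ℕ × ℕ))
    (hC : IsCover R S C) (l : ℕ) :
    S.drop (startPos C l - 1) = ((C.drop l).map (blockStr R)).flatten := by
  obtain ⟨hb, hflat⟩ := hC
  have hlen : (((C.take l).map (blockStr R)).flatten).length
      = ((C.take l).map blockLen).sum := by
    rw [List.length_flatten, List.map_map]
    congr 1
    apply List.map_congr_left
    intro b hbm
    exact blockStr_length R b (hb b (List.mem_of_mem_take hbm))
  have h1 : startPos C l - 1 = (((C.take l).map (blockStr R)).flatten).length := by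
    rw [hlen]; simp [startPos]
  have h2 : ((C.take l).map (blockStr R)).flatten ++ ((C.drop l).map (blockStr R)).flatten = S := by
    rw [← List.flatten_append, ← List.map_append, List.take_append_drop, hflat]
  rw [h1, ← h2, List.drop_left]

lemma greedy_maximal {σ : Type*} (R S : List σ) (C : List (ℕ × ℕ))
    (hC : IsCover R S C) (hG : IsGreedy R S C) : IsMaximal R C := by
  intro l h hsub
  have hl : l < C.length := by omega
  have hdrop := drop_startPos R S C hC l
  have hcons : C.drop l = C[l] :: C[l+1] :: C.drop (l+2) := by
    rw [List.drop_eq_getElem_cons hl, List.drop_eq_getElem_cons h]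
  have hpre : blockStr R (C[l]'hl) ++ blockStr R (C[l+1]'h) <+: S.drop (startPos C l - 1) := by
    rw [hdrop, hcons]
    simp only [List.map_cons, List.flatten_cons, ← List.append_assoc]
    exact ⟨_, rfl⟩
  have hle := hG l hl _ hpre hsub
  have h0 := blockStr_length R (C[l]'hl) (hC.1 _ (List.getElem_mem hl))
  have h1 := blockStr_length R (C[l+1]'h) (hC.1 _ (List.getElem_mem h))
  rw [List.length_append, h0, h1] at hle
  unfold blockLen at hle
  omega

lemma single_substring {σ : Type*} {α : σ} {R : List σ} (h : OccursIn α R) :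
    IsSubstring [α] R := by
  obtain ⟨i, h1, h2, h3⟩ := h
  refine ⟨R.take (i-1), R.drop i, ?_⟩
  have h3' : [α] = (R.drop (i-1)).take 1 := by simpa [sub] using h3
  have hd : R.drop i = List.drop 1 (R.drop (i-1)) := by
    rw [List.drop_drop]; congr 1; omega
  rw [hd, h3', List.append_assoc, List.take_append_drop, List.take_append_drop]

lemma exists_greedy {σ : Type*} (R : List σ) :
    ∀ n (S : List σ), S.length ≤ n → (∀ α ∈ S, OccursIn α R) →
      ∃ C, IsCover R S C ∧ IsGreedy R S C := by
  intro n
  induction n with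
  | zero =>
    intro S hlen _
    have : S = [] := List.eq_nil_of_length_eq_zero (by omega)
    subst this
    exact ⟨[], ⟨by simp, by simp [IsCover]⟩, by intro l h; simp at h⟩
  | succ n ih =>
    intro S hlen hocc
    by_cases hS : S = []
    · subst hS; exact ⟨[], ⟨by simp, by simp [IsCover]⟩, by intro l h; simp at h⟩
    · classical
      have hS1 : 1 ≤ S.length := by
        cases S with
        | nil => simp at hS
        | cons a t => simp
      set P : ℕ → Prop := fun k => IsSubstring (S.take k) R with hP
      have hP1 : P 1 := by
        obtain ⟨a, t, rfl⟩ : ∃ a t, S = a :: t := by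
          cases S with
          | nil => simp at hS
          | cons a t => exact ⟨_, _, rfl⟩
        simpa [hP] using single_substring (hocc a (by simp))
      set k := Nat.findGreatest P S.length with hk
      have hk1 : 1 ≤ k := Nat.le_findGreatest hS1 hP1
      have hkS : k ≤ S.length := Nat.findGreatest_le _
      have hkP : P k := Nat.findGreatest_spec hS1 hP1
      have hmax : ∀ m, m ≤ S.length → P m → m ≤ k := fun m hm hPm => Nat.le_findGreatest hm hPm
      obtain ⟨u, v, huv⟩ := hkP
      rw [List.append_assoc] at huv
      set b : ℕ × ℕ := (u.length + 1, u.length + k) with hb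
      have hlk : (S.take k).length = k := by simp; omega
      have hbbound : 1 ≤ b.1 ∧ b.1 ≤ b.2 ∧ b.2 ≤ R.length := by
        refine ⟨by simp [hb], by simp [hb]; omega, ?_⟩
        have : R.length = u.length + ((S.take k).length + v.length) := by
          rw [huv]; simp
        simp [hb]; omega
      have hblen : blockLen b = k := by simp [blockLen, hb]; omega
      have hbstr : blockStr R b = S.take k := by
        show ((R.drop (u.length + 1 - 1)).take (u.length + k - (u.length + 1) + 1)) = S.take k
        have e1 : u.length + 1 - 1 = u.length := by omega
        have e2 : u.length + k - (u.length + 1) + 1 = k := by omega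
        rw [e1, e2, huv, List.drop_left]
        exact List.take_left' hlk
      have hlen' : (S.drop k).length ≤ n := by simp; omega
      have hocc' : ∀ α ∈ S.drop k, OccursIn α R := fun α hα =>
        hocc α (List.mem_of_mem_drop hα)
      obtain ⟨C', hC', hG'⟩ := ih (S.drop k) hlen' hocc'
      refine ⟨b :: C', ⟨?_, ?_⟩, ?_⟩
      · intro b' hb'
        rcases List.mem_cons.mp hb' with h | h
        · subst h; exact hbbound
        · exact hC'.1 b' h
      · rw [List.map_cons, List.flatten_cons, hbstr, ← hC'.2, List.take_append_drop]
      · intro l hl x hx hxsub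
        cases l with
        | zero =>
          have : startPos (b :: C') 0 - 1 = 0 := by simp [startPos]
          rw [this, List.drop_zero] at hx
          have hxt : S.take x.length = x := (List.prefix_iff_eq_take.mp hx).symm
          have hxle : x.length ≤ S.length := hx.length_le
          have : x.length ≤ k := hmax x.length hxle (by simp only [hP, hxt]; exact hxsub)
          simpa [hblen] using this
        | succ l =>
          have hl' : l < C'.length := by simpa using hl
          have hsp : startPos (b :: C') (l+1) - 1 = k + (startPos C' l - 1) := by
            simp [startPos, List.take_succ_cons, hblen]
          rw [hsp, ← List.drop_drop] at hx
          have := hG' l hl' x hx hxsub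
          simpa using this

/-- If `S` is nonempty and all of its characters occur in `R`, then `S` has a maximal
cover w.r.t. `R`; in particular the greedy cover is a maximal cover. -/
theorem greedy_cover_is_maximal {σ : Type*} (R S : List σ) (hS : S ≠ [])
    (hocc : ∀ α ∈ S, OccursIn α R) :
    (∃ C, IsCover R S C ∧ IsGreedy R S C ∧ IsMaximal R C) ∧
    (∀ C, IsCover R S C → IsGreedy R S C → IsMaximal R C) := by
  constructor
  · obtain ⟨C, hC, hG⟩ := exists_greedy R S.length S le_rfl hocc
    exact ⟨C, hC, hG, greedy_maximal R S C hC hG⟩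
  · intro C hC hG
    exact greedy_maximal R S C hC hG
end

section
/- Let R and S be strings over an alphabet Σ, let C be a cover of S with respect to R of size m, let 1 ≤ i ≤ |S|, and let α be a character occurring in R. Then the string obtained from S by replacing its i-th character with α has a cover with respect to R of size at most m + 2. -/
lemma blockStr_length_s16 {σ : Type*} (R : List σ) (a b : ℕ)
    (h1 : 1 ≤ a) (h2 : a ≤ b) (h3 : b ≤ R.length) :
    (blockStr R (a, b)).length = b - a + 1 := by
  simp only [blockStr, sub, List.length_take, List.length_drop]
  omega

lemma blockStr_take {σ : Type*} (R : List σ) (a b t : ℕ)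
    (ht1 : 1 ≤ t) (ht : t ≤ b - a + 1) :
    (blockStr R (a, b)).take t = blockStr R (a, a + t - 1) := by
  show ((R.drop (a-1)).take (b - a + 1)).take t = (R.drop (a-1)).take (a + t - 1 - a + 1)
  rw [List.take_take]
  congr 1
  omega

lemma blockStr_drop {σ : Type*} (R : List σ) (a b t : ℕ)
    (h1 : 1 ≤ a) (ht : t ≤ b - a) :
    (blockStr R (a, b)).drop t = blockStr R (a + t, b) := by
  show ((R.drop (a-1)).take (b - a + 1)).drop t = (R.drop (a + t - 1)).take (b - (a + t) + 1)
  rw [List.drop_take, List.drop_drop]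
  have e1 : a - 1 + t = a + t - 1 := by omega
  have e2 : b - a + 1 - t = b - (a + t) + 1 := by omega
  rw [e1, e2]

lemma aux {σ : Type*} (R : List σ) (α : σ) (k : ℕ)
    (hk1 : 1 ≤ k) (hk2 : k ≤ R.length) (hkα : [α] = sub R k k) :
    ∀ (C : List (ℕ × ℕ)) (S : List σ), IsCover R S C →
    ∀ i, 1 ≤ i → i ≤ S.length →
    ∃ C' : List (ℕ × ℕ),
      IsCover R (S.take (i - 1) ++ [α] ++ S.drop i) C' ∧
      C'.length ≤ C.length + 2 := by
  intro C
  induction C with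
  | nil =>
    intro S hC i hi1 hi2
    simp [IsCover] at hC
    subst hC; simp at hi2; omega
  | cons c C' ih =>
    intro S hC i hi1 hi2
    obtain ⟨hval, hS⟩ := hC
    obtain ⟨a, b⟩ := c
    obtain ⟨ha1, hab, hbR⟩ := hval (a, b) (by simp)
    simp only at ha1 hab hbR
    set B := blockStr R (a, b) with hB
    set T := (C'.map (blockStr R)).flatten with hT
    have hSeq : S = B ++ T := by simpa using hS
    have hL : B.length = b - a + 1 := blockStr_length_s16 R a b ha1 hab hbR
    have hkblk : blockStr R (k, k) = [α] := hkα.symm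
    by_cases hcase : i ≤ b - a + 1
    · -- split this block
      have htake : S.take (i - 1) = B.take (i - 1) := by
        have hz : i - 1 - B.length = 0 := by omega
        rw [hSeq, List.take_append, hz, List.take_zero, List.append_nil]
      have hdrop : S.drop i = B.drop i ++ T := by
        have hz : i - B.length = 0 := by omega
        rw [hSeq, List.drop_append, hz, List.drop_zero]
      have hTake2 : 2 ≤ i → B.take (i-1) = blockStr R (a, a + i - 2) := by
        intro h2
        rw [hB, blockStr_take R a b (i-1) (by omega) (by omega)]
        congr 2; omega
      have hDrop2 : i ≤ b - a → B.drop i = blockStr R (a + i, b) := by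
        intro h2
        exact blockStr_drop R a b i ha1 h2
      have hDropNil : i = b - a + 1 → B.drop i = [] := by
        intro h2
        apply List.drop_eq_nil_of_le; omega
      by_cases h1 : i = 1 <;> by_cases h2 : i = b - a + 1
      · subst h1
        refine ⟨(k, k) :: C', ⟨?_, ?_⟩, by simp⟩
        · intro p hp
          simp at hp
          rcases hp with rfl | hp
          · exact ⟨hk1, le_refl k, hk2⟩
          · exact hval p (by simp [hp])
        · rw [htake, hdrop, hDropNil h2]
          simp [hkblk]; rfl
      · subst h1
        refine ⟨(k, k) :: (a + 1, b) :: C', ⟨?_, ?_⟩, by simp⟩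
        · intro p hp
          simp at hp
          rcases hp with rfl | rfl | hp
          · exact ⟨hk1, le_refl k, hk2⟩
          · refine ⟨by omega, by omega, by omega⟩
          · exact hval p (by simp [hp])
        · rw [htake, hdrop, hDrop2 (by omega)]
          simp [hkblk]; rfl
      · refine ⟨(a, a + i - 2) :: (k, k) :: C', ⟨?_, ?_⟩, by simp⟩
        · intro p hp
          simp at hp
          rcases hp with rfl | rfl | hp
          · refine ⟨by omega, by omega, by omega⟩
          · exact ⟨hk1, le_refl k, hk2⟩
          · exact hval p (by simp [hp])
        · rw [htake, hdrop, hTake2 (by omega), hDropNil h2]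
          simp [hkblk]; rfl
      · refine ⟨(a, a + i - 2) :: (k, k) :: (a + i, b) :: C', ⟨?_, ?_⟩, by simp⟩
        · intro p hp
          simp at hp
          rcases hp with rfl | rfl | rfl | hp
          · refine ⟨by omega, by omega, by omega⟩
          · exact ⟨hk1, le_refl k, hk2⟩
          · refine ⟨by omega, by omega, by omega⟩
          · exact hval p (by simp [hp])
        · rw [htake, hdrop, hTake2 (by omega), hDrop2 (by omega)]
          simp [hkblk]; rfl
    · -- recurse into the tail
      push_neg at hcase
      have hTlen : i - B.length ≤ T.length := by
        rw [hSeq] at hi2; simp at hi2; omega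
      obtain ⟨C'', ⟨hval'', hflat''⟩, hlen''⟩ :=
        ih T ⟨fun p hp => hval p (by simp [hp]), rfl⟩ (i - B.length) (by omega) hTlen
      refine ⟨(a, b) :: C'', ⟨?_, ?_⟩, ?_⟩
      · intro p hp
        simp at hp
        rcases hp with rfl | hp
        · exact ⟨ha1, hab, hbR⟩
        · exact hval'' p hp
      · have htk : S.take (i - 1) = B ++ T.take (i - B.length - 1) := by
          rw [hSeq, List.take_append, List.take_of_length_le (by omega)]
          congr 2; omega
        have hdp : S.drop i = T.drop (i - B.length) := by
          rw [hSeq, List.drop_append,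
            List.drop_eq_nil_of_le (by omega), List.nil_append]
        rw [htk, hdp]
        simp only [List.map_cons, List.flatten_cons, List.append_assoc]
        congr 1
        rw [← hflat'']
        simp [List.append_assoc]
      · simp at hlen'' ⊢; omega

/-- If `S` has a cover of size `m` w.r.t. `R`, `1 ≤ i ≤ |S|`, and `α` occurs in `R`,
then the string obtained by replacing the `i`-th character of `S` with `α` has a
cover of size at most `m + 2`. -/
theorem replace_cover {σ : Type*} (R S : List σ) (C : List (ℕ × ℕ))
    (hC : IsCover R S C) (i : ℕ) (hi1 : 1 ≤ i) (hi2 : i ≤ S.length)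
    (α : σ) (hα : OccursIn α R) :
    ∃ C' : List (ℕ × ℕ),
      IsCover R (S.take (i - 1) ++ [α] ++ S.drop i) C' ∧
      C'.length ≤ C.length + 2 := by
  obtain ⟨k, hk1, hk2, hkα⟩ := hα
  exact aux R α k hk1 hk2 hkα C S hC i hi1 hi2
end

section
/- Let R and S be strings over an alphabet Σ, let C be a cover of S with respect to R of size m, let 1 ≤ i ≤ |S| + 1, and let α be a character occurring in R. Then the string obtained from S by inserting the character α before position i has a cover with respect to R of size at most m + 2. -/
lemma sub_length {σ : Type*} (R : List σ) (p q : ℕ) (hq : q ≤ R.length) :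
    (sub R p q).length = (q - p + 1) ⊓ (R.length - (p - 1)) := by
  simp only [sub, List.length_take, List.length_drop]

lemma sub_take {σ : Type*} (R : List σ) (p q k : ℕ) (hk : 1 ≤ k) (hk2 : k ≤ q - p + 1) :
    (sub R p q).take k = sub R p (p + k - 1) := by
  simp only [sub, List.take_take]
  congr 1
  omega

lemma sub_drop {σ : Type*} (R : List σ) (p q k : ℕ) (hp : 1 ≤ p) (hk : k ≤ q - p) :
    (sub R p q).drop k = sub R (p + k) q := by
  simp only [sub, List.drop_take, List.drop_drop]
  rw [show p - 1 + k = p + k - 1 by omega, show q - p + 1 - k = q - (p + k) + 1 by omega]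

lemma split_cover {σ : Type*} (R : List σ) (C : List (ℕ × ℕ))
    (hv : ∀ b ∈ C, 1 ≤ b.1 ∧ b.1 ≤ b.2 ∧ b.2 ≤ R.length) (k : ℕ) :
    ∃ C1 C2 : List (ℕ × ℕ),
      (∀ b ∈ C1, 1 ≤ b.1 ∧ b.1 ≤ b.2 ∧ b.2 ≤ R.length) ∧
      (∀ b ∈ C2, 1 ≤ b.1 ∧ b.1 ≤ b.2 ∧ b.2 ≤ R.length) ∧
      (C.map (blockStr R)).flatten.take k = (C1.map (blockStr R)).flatten ∧
      (C.map (blockStr R)).flatten.drop k = (C2.map (blockStr R)).flatten ∧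
      C1.length + C2.length ≤ C.length + 1 := by
  induction C generalizing k with
  | nil => exact ⟨[], [], by simp, by simp, by simp, by simp, by simp⟩
  | cons b C ih =>
    have hb := hv b (by simp)
    have hvC : ∀ b ∈ C, 1 ≤ b.1 ∧ b.1 ≤ b.2 ∧ b.2 ≤ R.length := fun x hx => hv x (by simp [hx])
    set L := (blockStr R b).length with hL
    have hLval : L = b.2 - b.1 + 1 := by
      rw [hL, blockStr, sub_length R _ _ hb.2.2]; omega
    rcases Nat.eq_zero_or_pos k with hk0 | hkpos
    · exact ⟨[], b :: C, by simp, hv, by simp [hk0], by simp [hk0], by simp⟩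
    rcases le_or_gt L k with hkL | hkL
    · -- k ≥ L : keep block b whole, recurse
      obtain ⟨C1, C2, h1, h2, h3, h4, h5⟩ := ih hvC (k - L)
      refine ⟨b :: C1, C2, ?_, h2, ?_, ?_, by simp only [List.length_cons]; omega⟩
      · intro x hx; rcases List.mem_cons.mp hx with h | h
        · exact h ▸ hb
        · exact h1 x h
      · simp only [List.map_cons, List.flatten_cons, List.take_append]
        rw [List.take_of_length_le (by omega), h3]
      · simp only [List.map_cons, List.flatten_cons, List.drop_append]
        rw [List.drop_of_length_le (by omega), h4]
        simp
    · -- 0 < k < L : split block b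
      refine ⟨[(b.1, b.1 + k - 1)], (b.1 + k, b.2) :: C, ?_, ?_, ?_, ?_, by simp only [List.length_cons, List.length_nil]; omega⟩
      · intro x hx; simp at hx; subst hx; simp; omega
      · intro x hx; rcases List.mem_cons.mp hx with h | h
        · subst h; simp; omega
        · exact hvC x h
      · simp only [List.map_cons, List.flatten_cons, List.take_append]
        have : k - L = 0 := by omega
        rw [this, List.take_zero, List.append_nil]
        simp only [List.map_nil, List.flatten_nil, List.append_nil]
        rw [blockStr, blockStr, sub_take R b.1 b.2 k hkpos (by omega)]
      · simp only [List.map_cons, List.flatten_cons, List.drop_append]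
        have : k - L = 0 := by omega
        rw [this, List.drop_zero]
        rw [blockStr, blockStr, sub_drop R b.1 b.2 k hb.1 (by omega)]

/-- If `S` has a cover of size `m` w.r.t. `R`, `1 ≤ i ≤ |S| + 1`, and `α` occurs in `R`,
then the string obtained by inserting the character `α` before position `i` of `S` has
a cover of size at most `m + 2`. -/
theorem insert_cover {σ : Type*} (R S : List σ) (C : List (ℕ × ℕ))
    (hC : IsCover R S C) (i : ℕ) (hi1 : 1 ≤ i) (hi2 : i ≤ S.length + 1)
    (α : σ) (hα : OccursIn α R) :
    ∃ C' : List (ℕ × ℕ),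
      IsCover R (S.take (i - 1) ++ [α] ++ S.drop (i - 1)) C' ∧
      C'.length ≤ C.length + 2 := by
  obtain ⟨hv, hS⟩ := hC
  obtain ⟨j, hj1, hj2, hjα⟩ := hα
  obtain ⟨C1, C2, h1, h2, h3, h4, h5⟩ := split_cover R C hv (i - 1)
  refine ⟨C1 ++ (j, j) :: C2, ⟨?_, ?_⟩, by simp; omega⟩
  · intro x hx
    rcases List.mem_append.mp hx with h | h
    · exact h1 x h
    · rcases List.mem_cons.mp h with h | h
      · subst h; exact ⟨hj1, le_refl _, hj2⟩
      · exact h2 x h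
  · rw [hS]
    simp only [List.map_append, List.map_cons, List.flatten_append, List.flatten_cons]
    rw [← h3, ← h4]
    have : blockStr R (j, j) = [α] := by rw [blockStr]; exact hjα.symm
    rw [this]
    simp [hS]
end
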